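/- arXiv:1810.06267 — 3 statements merged into one kernel-verified Lean document; each statement's English description precedes it below -/
import Mathlib

section
/- Let $M$ be a matroid, let $S = \{s_1, \dots, s_u\}$ be an independent set of $M$, and let $I_1, \dots, I_t$ be independent sets of $M$. Suppose there is a surjective function $f : \{1,\dots,u\} \to \{1,\dots,t\}$ such that $s_i$ lies in the span of $I_{f(i)}$ for every $i$. Then there exists an independent set $B$ of $M$ such that $B \cap I_j \neq \emptyset$ for every $j \in \{1,\dots,t\}$. -/
private lemma aux_transversal {α : Type*} (M : Matroid α) {t : ℕ}
    (I : Fin t → Set α) (hI : ∀ j, M.Indep (I j)) (K : Finset (Fin t)) :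
    ∀ (A : Set α) (x : Fin t → α), Set.InjOn x K → (∀ m ∈ K, x m ∉ A) →
      M.Indep (A ∪ x '' K) → (∀ j ∈ K, x j ∈ M.closure (I j)) →
      ∃ B : Set α, M.Indep (A ∪ B) ∧ ∀ j ∈ K, (B ∩ I j).Nonempty := by
  induction K using Finset.induction_on with
  | empty =>
    intro A x _ _ hind _
    exact ⟨∅, by simpa using hind.subset Set.subset_union_left, by simp⟩
  | @insert j K' hjK' ih =>
    intro A x hinj hA hind hcl
    set C : Set α := A ∪ x '' K' with hC
    have hxj_notim : x j ∉ x '' (K' : Set (Fin t)) := by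
      rintro ⟨m, hm, hme⟩
      exact hjK' (by
        have : m = j := hinj (by simp [hm]) (by simp) hme
        rwa [this] at hm)
    have hxj_notC : x j ∉ C := by
      rintro (h | h)
      · exact hA j (Finset.mem_insert_self _ _) h
      · exact hxj_notim h
    have hset : (A ∪ x '' (insert j K' : Finset (Fin t))) = insert (x j) C := by
      rw [Finset.coe_insert, Set.image_insert_eq, Set.union_insert]
    have hCins : M.Indep (insert (x j) C) := by rwa [hset] at hind
    have hCind : M.Indep C := hCins.subset (Set.subset_insert _ _)
    have hxj_cl : x j ∉ M.closure C := by
      have h1 := hCins.notMem_closure_diff_of_mem (Set.mem_insert _ _)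
      rwa [Set.insert_diff_self_of_notMem hxj_notC] at h1
    have hIj_not_sub : ¬ I j ⊆ M.closure C := by
      intro h
      apply hxj_cl
      have h2 : M.closure (I j) ⊆ M.closure C := by
        have := M.closure_subset_closure h (X := I j)
        rwa [M.closure_closure] at this
      exact h2 (hcl j (Finset.mem_insert_self _ _))
    obtain ⟨y, hyI, hycl⟩ := Set.not_subset.mp hIj_not_sub
    have hyE : y ∈ M.E := (hI j).subset_ground hyI
    have hins : M.Indep (insert y C) := by
      rw [hCind.insert_indep_iff]
      exact Or.inl ⟨hyE, hycl⟩
    have hyC : y ∉ C := fun h => hycl (M.subset_closure C hCind.subset_ground h)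
    obtain ⟨B, hBind, hBhit⟩ := ih (insert y A) x
      (hinj.mono (by simp only [Finset.coe_insert]; exact Set.subset_insert _ _))
      (by
        intro m hm
        rintro (h | h)
        · exact hyC (by rw [← h]; exact Or.inr ⟨m, hm, rfl⟩)
        · exact hA m (Finset.mem_insert_of_mem hm) h)
      (by rwa [Set.insert_union])
      (fun m hm => hcl m (Finset.mem_insert_of_mem hm))
    refine ⟨insert y B, ?_, ?_⟩
    · rwa [Set.union_insert, ← Set.insert_union]
    · intro m hm
      rcases Finset.mem_insert.mp hm with rfl | hm'
      · exact ⟨y, Set.mem_insert _ _, hyI⟩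
      · obtain ⟨b, hb1, hb2⟩ := hBhit m hm'
        exact ⟨b, Set.mem_insert_of_mem _ hb1, hb2⟩

theorem exists_indep_transversal {α : Type*} (M : Matroid α) (u t : ℕ)
    (s : Fin u → α) (hs : Function.Injective s)
    (hS : M.Indep (Set.range s))
    (I : Fin t → Set α) (hI : ∀ j, M.Indep (I j))
    (f : Fin u → Fin t) (hf : Function.Surjective f)
    (hspan : ∀ i, s i ∈ M.closure (I (f i))) :
    ∃ B : Set α, M.Indep B ∧ ∀ j, (B ∩ I j).Nonempty := by
  obtain ⟨g, hg⟩ := hf.hasRightInverse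
  obtain ⟨B, hBind, hBhit⟩ := aux_transversal M I hI Finset.univ ∅ (fun j => s (g j))
    (by
      intro a _ b _ h
      have hgab : g a = g b := hs h
      have := congrArg f hgab
      rwa [hg a, hg b] at this)
    (by simp)
    (by
      simp only [Set.empty_union]
      exact hS.subset (by rintro _ ⟨m, _, rfl⟩; exact ⟨g m, rfl⟩))
    (by
      intro j _
      have := hspan (g j)
      rwa [hg j] at this)
  exact ⟨B, by simpa using hBind, fun j => hBhit j (Finset.mem_univ j)⟩
end

section
/- Let $(E,d)$ be a metric space, $\tau > 0$, and let $F \subseteq E$ be a finite set with $|F| \geq (m+1)z + 1$. Suppose there exist points $b_1, \dots, b_m \in E$ and a set $O \subseteq F$ with $|O| \leq z$ such that every $f \in F \setminus O$ satisfies $d(f, b_i) \leq \tau$ for some $i$. Then there exists $c \in F$ such that $|\{x \in F : d(c,x) \leq 2\tau\}| \geq z+1$. -/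
theorem exists_dense_ball_point {E : Type*} [MetricSpace E] [DecidableEq E]
    (τ : ℝ) (hτ : 0 < τ) (m z : ℕ) (F : Finset E)
    (hF : (m + 1) * z + 1 ≤ F.card)
    (b : Fin m → E) (O : Finset E) (hOF : O ⊆ F) (hO : O.card ≤ z)
    (hcover : ∀ f ∈ F, f ∉ O → ∃ i : Fin m, dist f (b i) ≤ τ) :
    ∃ c ∈ F, z + 1 ≤ (F.filter (fun x => dist c x ≤ 2 * τ)).card := by
  classical
  set S := F \ O with hS
  have hSsub : S ⊆ F := Finset.sdiff_subset
  have hScard : m * z + 1 ≤ S.card := by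
    have h1 : S.card = F.card - O.card := Finset.card_sdiff_of_subset hOF
    have h2 : O.card ≤ F.card := Finset.card_le_card hOF
    have : (m + 1) * z = m * z + z := by ring
    omega
  have hScov : ∀ f ∈ S, ∃ i : Fin m, dist f (b i) ≤ τ := by
    intro f hf
    rw [hS, Finset.mem_sdiff] at hf
    exact hcover f hf.1 hf.2
  have hm : 0 < m := by
    rcases Nat.eq_zero_or_pos m with h | h
    · exfalso
      have : 0 < S.card := by omega
      obtain ⟨f, hf⟩ := Finset.card_pos.mp this
      obtain ⟨i, _⟩ := hScov f hf
      exact absurd i.2 (by omega)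
    · exact h
  let g : E → Fin m := fun f => if h : ∃ i : Fin m, dist f (b i) ≤ τ then h.choose else ⟨0, hm⟩
  have hg : ∀ f ∈ S, dist f (b (g f)) ≤ τ := by
    intro f hf
    have h := hScov f hf
    simp only [g, dif_pos h]
    exact h.choose_spec
  have hmaps : ∀ f ∈ S, g f ∈ (Finset.univ : Finset (Fin m)) := fun _ _ => Finset.mem_univ _
  have hlt : (Finset.univ : Finset (Fin m)).card * z < S.card := by
    simp only [Finset.card_univ, Fintype.card_fin]; omega
  obtain ⟨i, _, hi⟩ := Finset.exists_lt_card_fiber_of_mul_lt_card_of_maps_to hmaps hlt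
  set T := S.filter (fun f => g f = i) with hT
  have hTne : T.Nonempty := Finset.card_pos.mp (by omega)
  obtain ⟨c, hc⟩ := hTne
  have hcS : c ∈ S := (Finset.mem_filter.mp hc).1
  have hci : dist c (b i) ≤ τ := by
    have := hg c hcS
    rwa [(Finset.mem_filter.mp hc).2] at this
  refine ⟨c, hSsub hcS, ?_⟩
  have hsub : T ⊆ F.filter (fun x => dist c x ≤ 2 * τ) := by
    intro x hx
    have hxS : x ∈ S := (Finset.mem_filter.mp hx).1
    have hxi : dist x (b i) ≤ τ := by
      have := hg x hxS
      rwa [(Finset.mem_filter.mp hx).2] at this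
    refine Finset.mem_filter.mpr ⟨hSsub hxS, ?_⟩
    calc dist c x ≤ dist c (b i) + dist (b i) x := dist_triangle _ _ _
      _ ≤ τ + τ := add_le_add hci (by rwa [dist_comm])
      _ = 2 * τ := by ring
  have := Finset.card_le_card hsub
  omega
end

section
/- Let $(E,d)$ be a metric space, $\tau > 0$, and let $C \subseteq E$ be finite with $d(c,c') > 2\tau$ for all distinct $c,c' \in C$. Suppose each $c \in C$ is assigned a set $A_c \subseteq \mathfrak{B}(c, 2\tau)$ with $|A_c| \geq z+1$, and suppose additionally that for distinct $c, c' \in C$ and any $e \in A_c$, $e' \in A_{c'}$ we have $d(e,e') > 2\tau$. If $S \subseteq E$ is a set of 'centers' such that the set of points at distance more than $\tau$ from $S$ has size at most $z$, then for each $c \in C$ there exists $x_c \in A_c$ with $d(x_c, S) \leq \tau$, and the assignment $c \mapsto$ (the nearest center of $S$ to $x_c$) is injective. -/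
theorem support_points_served_injectively {E : Type*} [MetricSpace E] [Fintype E]
    [DecidableEq E] (τ : ℝ) (hτ : 0 < τ) (z : ℕ) (C : Finset E)
    (hfar : ∀ c ∈ C, ∀ c' ∈ C, c ≠ c' → 2 * τ < dist c c')
    (A : E → Finset E)
    (hA : ∀ c ∈ C, (∀ x ∈ A c, dist c x ≤ 2 * τ) ∧ z + 1 ≤ (A c).card)
    (hcross : ∀ c ∈ C, ∀ c' ∈ C, c ≠ c' → ∀ e ∈ A c, ∀ e' ∈ A c', 2 * τ < dist e e')
    (S : Finset E) (hS : S.Nonempty)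
    (houtliers : (Finset.univ.filter (fun e : E => ∀ s ∈ S, τ < dist e s)).card ≤ z) :
    ∃ x : E → E, (∀ c ∈ C, x c ∈ A c ∧ ∃ s ∈ S, dist (x c) s ≤ τ) ∧
      ∀ g : E → E, (∀ c ∈ C, g c ∈ S ∧ dist (x c) (g c) ≤ τ) → Set.InjOn g ↑C := by
  classical
  have key : ∀ c : E, c ∈ C → ∃ e, e ∈ A c ∧ ∃ s ∈ S, dist e s ≤ τ := by
    intro c hc
    by_contra h
    push_neg at h
    have hsub : A c ⊆ Finset.univ.filter (fun e : E => ∀ s ∈ S, τ < dist e s) := by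
      intro e he
      simp only [Finset.mem_filter, Finset.mem_univ, true_and]
      intro s hs
      exact h e he s hs
    have h1 := Finset.card_le_card hsub
    have h2 := (hA c hc).2
    omega
  choose x hx1 hx2 using key
  refine ⟨fun c => if h : c ∈ C then x c h else c, ?_, ?_⟩
  · intro c hc
    simp only [dif_pos hc]
    exact ⟨hx1 c hc, hx2 c hc⟩
  · intro g hg c hcs c' hcs' hgg
    have hc : c ∈ C := hcs
    have hc' : c' ∈ C := hcs'
    by_contra hne
    have h1 := hg c hc
    have h2 := hg c' hc'
    simp only [dif_pos hc, dif_pos hc'] at h1 h2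
    have hcr := hcross c hc c' hc' hne (x c hc) (hx1 c hc) (x c' hc') (hx1 c' hc')
    have hd : dist (x c hc) (x c' hc') ≤ dist (x c hc) (g c) + dist (g c) (x c' hc') :=
      dist_triangle _ _ _
    rw [hgg] at hd h1
    have h3 : dist (g c') (x c' hc') ≤ τ := by rw [dist_comm]; exact h2.2
    linarith [h1.2]
end
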